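/- There exists a finite rotation-puzzle instance 𝒜 over the three-color tile set T_3 (the CROSS subpuzzle, crossing two adjacent wires) with two designated input boundary edges (a left one and a right one) at its bottom and two designated output boundary edges (a left one and a right one) at its top, such that for each pair of colors (c₁, c₂) ∈ {blue, red}² the instance 𝒜 has exactly one solution whose colors at the left and right input edges are c₁ and c₂ respectively, and this solution has color c₂ at the left output edge and color c₁ at the right output edge (i.e., the two input colors are swapped at the outputs). -/

import Mathlib

/-- The three Tantrix colors used in the three-color tile set. -/
inductive Color where
  | red
  | yellow
  | blue
deriving DecidableEq

/-- A tile is its clockwise color sequence: a word of length 6 over the colors,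
edges indexed `0, …, 5` clockwise. -/
abbrev Tile := Fin 6 → Color

/-- Cyclic rotation of a tile by `k` steps: edge `i` of the rotated tile carries the
color of edge `i + k` of the original sequence. -/
def rotTile (k : Fin 6) (t : Tile) : Tile := fun i => t (i + k)

open Color in
/-- The three-color tile set `T₃`, consisting of the 14 color sequences
yrrbby, ryybbr, yrrybb, ryyrbb, brrbyy, yrbybr, rbyryb, brybyr, brbyyr, bybrry,
ryrbby, rbryyb, ybyrrb, yrybbr. -/
def T3 : Set Tile :=
  { ![yellow,red,red,blue,blue,yellow],
    ![red,yellow,yellow,blue,blue,red],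
    ![yellow,red,red,yellow,blue,blue],
    ![red,yellow,yellow,red,blue,blue],
    ![blue,red,red,blue,yellow,yellow],
    ![yellow,red,blue,yellow,blue,red],
    ![red,blue,yellow,red,yellow,blue],
    ![blue,red,yellow,blue,yellow,red],
    ![blue,red,blue,yellow,yellow,red],
    ![blue,yellow,blue,red,red,yellow],
    ![red,yellow,red,blue,blue,yellow],
    ![red,blue,red,yellow,yellow,blue],
    ![yellow,blue,yellow,red,red,blue],
    ![yellow,red,yellow,blue,blue,red] }

/-- The six neighbor offsets of the hexagonal layout of `ℤ²`, listed clockwise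
starting from straight up; edge `i` of a tile at `x` is the edge shared with the
neighboring point `x + dirs i`, and opposite directions differ by `3` (mod 6).
Two points are neighbors exactly if their difference is one of these offsets. -/
def dirs : Fin 6 → ℤ × ℤ := ![(0,1), (1,1), (1,0), (0,-1), (-1,-1), (-1,0)]

/-- A finite rotation-puzzle instance over the tile set `T3`:
a function from a finite set of points of `ℤ²` to `T3`. -/
structure Puzzle where
  tiles : ℤ × ℤ → Option Tile
  finite : {x | tiles x ≠ none}.Finite
  memT3 : ∀ x t, tiles x = some t → t ∈ T3

/-- `sol` is a solution of the instance `P`: it assigns to each occupied point a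
cyclic rotation of the tile placed there, such that for every pair of neighboring
occupied points the two assigned sequences give the same color to their joint edge
(edge `d` of the tile at `x` is glued to edge `d + 3` of the tile at `x + dirs d`). -/
def IsSolution (P : Puzzle) (sol : ℤ × ℤ → Option Tile) : Prop :=
  (∀ x, (P.tiles x = none → sol x = none) ∧
    (∀ t, P.tiles x = some t → ∃ k : Fin 6, sol x = some (rotTile k t))) ∧
  (∀ (x : ℤ × ℤ) (d : Fin 6) (s s' : Tile),
    sol x = some s → sol (x + dirs d) = some s' → s d = s' (d + 3))

/-- `(x, d)` is a boundary edge of `P`: the point `x` is occupied and its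
neighbor in direction `d` is not. -/
def IsBoundary (P : Puzzle) (x : ℤ × ℤ) (d : Fin 6) : Prop :=
  P.tiles x ≠ none ∧ P.tiles (x + dirs d) = none

/-- The solution `sol` has color `c` at the edge in direction `d` of the tile at `x`. -/
def SolColor (sol : ℤ × ℤ → Option Tile) (x : ℤ × ℤ) (d : Fin 6) (c : Color) : Prop :=
  ∃ s, sol x = some s ∧ s d = c


namespace CrossAux

open Color

/-- The tile `yrrybb`, used at every point of the CROSS puzzle. -/
def t0 : Tile := ![yellow,red,red,yellow,blue,blue]

def p1 : ℤ × ℤ := (0,0)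
def p2 : ℤ × ℤ := (1,0)
def p3 : ℤ × ℤ := (2,0)
def p4 : ℤ × ℤ := (1,1)
def p5 : ℤ × ℤ := (2,1)

def Ptiles : ℤ × ℤ → Option Tile := fun x =>
  if x = p1 then some t0
  else if x = p2 then some t0
  else if x = p3 then some t0
  else if x = p4 then some t0
  else if x = p5 then some t0
  else none

lemma t0_mem : t0 ∈ T3 := by
  rw [T3]
  right; right; left; rfl

def P : Puzzle where
  tiles := Ptiles
  finite := by
    have hfin : ({p1, p2, p3, p4, p5} : Set (ℤ × ℤ)).Finite :=
      (((((Set.finite_singleton p5).insert p4).insert p3).insert p2).insert p1)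
    refine Set.Finite.subset hfin ?_
    intro x hx
    simp only [Set.mem_setOf_eq, Ptiles] at hx
    simp only [Set.mem_insert_iff, Set.mem_singleton_iff]
    split_ifs at hx with h1 h2 h3 h4 h5 <;> simp_all
  memT3 := by
    intro x t ht
    simp only [Ptiles] at ht
    split_ifs at ht
    case _ =>
      obtain rfl : t0 = t := by injection ht
      exact t0_mem
    case _ =>
      obtain rfl : t0 = t := by injection ht
      exact t0_mem
    case _ =>
      obtain rfl : t0 = t := by injection ht
      exact t0_mem
    case _ =>
      obtain rfl : t0 = t := by injection ht
      exact t0_mem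
    case _ =>
      obtain rfl : t0 = t := by injection ht
      exact t0_mem

def mkSol (a b e c d : Fin 6) : ℤ × ℤ → Option Tile := fun x =>
  if x = p1 then some (rotTile a t0)
  else if x = p2 then some (rotTile b t0)
  else if x = p3 then some (rotTile e t0)
  else if x = p4 then some (rotTile c t0)
  else if x = p5 then some (rotTile d t0)
  else none

lemma mkSol_p1 (a b e c d : Fin 6) : mkSol a b e c d p1 = some (rotTile a t0) := by
  unfold mkSol; rw [if_pos rfl]

lemma mkSol_p2 (a b e c d : Fin 6) : mkSol a b e c d p2 = some (rotTile b t0) := by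
  unfold mkSol; rw [if_neg (by decide), if_pos rfl]

lemma mkSol_p3 (a b e c d : Fin 6) : mkSol a b e c d p3 = some (rotTile e t0) := by
  unfold mkSol; rw [if_neg (by decide), if_neg (by decide), if_pos rfl]

lemma mkSol_p4 (a b e c d : Fin 6) : mkSol a b e c d p4 = some (rotTile c t0) := by
  unfold mkSol
  rw [if_neg (by decide), if_neg (by decide), if_neg (by decide), if_pos rfl]

lemma mkSol_p5 (a b e c d : Fin 6) : mkSol a b e c d p5 = some (rotTile d t0) := by
  unfold mkSol
  rw [if_neg (by decide), if_neg (by decide), if_neg (by decide), if_neg (by decide),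
    if_pos rfl]

lemma mkSol_none (a b e c d : Fin 6) (x : ℤ × ℤ) (h1 : x ≠ p1) (h2 : x ≠ p2)
    (h3 : x ≠ p3) (h4 : x ≠ p4) (h5 : x ≠ p5) : mkSol a b e c d x = none := by
  unfold mkSol
  rw [if_neg h1, if_neg h2, if_neg h3, if_neg h4, if_neg h5]

lemma Ptiles_none (x : ℤ × ℤ) (h1 : x ≠ p1) (h2 : x ≠ p2)
    (h3 : x ≠ p3) (h4 : x ≠ p4) (h5 : x ≠ p5) : Ptiles x = none := by
  unfold Ptiles
  rw [if_neg h1, if_neg h2, if_neg h3, if_neg h4, if_neg h5]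

lemma Ptiles_p1 : Ptiles p1 = some t0 := by unfold Ptiles; rw [if_pos rfl]
lemma Ptiles_p2 : Ptiles p2 = some t0 := by
  unfold Ptiles; rw [if_neg (by decide), if_pos rfl]
lemma Ptiles_p3 : Ptiles p3 = some t0 := by
  unfold Ptiles; rw [if_neg (by decide), if_neg (by decide), if_pos rfl]
lemma Ptiles_p4 : Ptiles p4 = some t0 := by
  unfold Ptiles
  rw [if_neg (by decide), if_neg (by decide), if_neg (by decide), if_pos rfl]
lemma Ptiles_p5 : Ptiles p5 = some t0 := by
  unfold Ptiles
  rw [if_neg (by decide), if_neg (by decide), if_neg (by decide), if_neg (by decide),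
    if_pos rfl]

/-- The glue conditions of the CROSS puzzle. -/
def G (a b e c d : Fin 6) : Prop :=
  rotTile a t0 2 = rotTile b t0 5 ∧
  rotTile a t0 1 = rotTile c t0 4 ∧
  rotTile b t0 2 = rotTile e t0 5 ∧
  rotTile b t0 0 = rotTile c t0 3 ∧
  rotTile b t0 1 = rotTile d t0 4 ∧
  rotTile e t0 0 = rotTile d t0 3 ∧
  rotTile c t0 2 = rotTile d t0 5

lemma isSolution_mkSol (a b e c d : Fin 6) (hG : G a b e c d) :
    IsSolution P (mkSol a b e c d) := by
  obtain ⟨g1, g2, g3, g4, g5, g6, g7⟩ := hG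
  constructor
  · intro x
    constructor
    · intro h
      simp only [P, Ptiles] at h
      simp only [mkSol]
      split_ifs at h ⊢ <;> simp_all
    · intro t ht
      simp only [P, Ptiles] at ht
      unfold mkSol
      split_ifs at ht with h1 h2 h3 h4 h5
      case _ =>
        obtain rfl : t0 = t := by injection ht
        exact ⟨a, by rw [if_pos h1]⟩
      case _ =>
        obtain rfl : t0 = t := by injection ht
        exact ⟨b, by rw [if_neg h1, if_pos h2]⟩
      case _ =>
        obtain rfl : t0 = t := by injection ht
        exact ⟨e, by rw [if_neg h1, if_neg h2, if_pos h3]⟩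
      case _ =>
        obtain rfl : t0 = t := by injection ht
        exact ⟨c, by rw [if_neg h1, if_neg h2, if_neg h3, if_pos h4]⟩
      case _ =>
        obtain rfl : t0 = t := by injection ht
        exact ⟨d, by rw [if_neg h1, if_neg h2, if_neg h3, if_neg h4, if_pos h5]⟩
  · intro x d' s s' hs hs'
    simp only [mkSol] at hs
    split_ifs at hs with h1 h2 h3 h4 h5
    · subst h1
      injection hs with hs; subst hs
      fin_cases d'
      · have hq : (none : Option Tile) = some s' :=
          (mkSol_none a b e c d _ (by decide) (by decide)
            (by decide) (by decide) (by decide)).symm.trans hs'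
        exact nomatch hq
      · have hq : some (rotTile c t0) = some s' :=
          (mkSol_p4 a b e c d).symm.trans hs'
        injection hq with hq
        rw [← hq]
        exact g2
      · have hq : some (rotTile b t0) = some s' :=
          (mkSol_p2 a b e c d).symm.trans hs'
        injection hq with hq
        rw [← hq]
        exact g1
      · have hq : (none : Option Tile) = some s' :=
          (mkSol_none a b e c d _ (by decide) (by decide)
            (by decide) (by decide) (by decide)).symm.trans hs'
        exact nomatch hq
      · have hq : (none : Option Tile) = some s' :=
          (mkSol_none a b e c d _ (by decide) (by decide)
            (by decide) (by decide) (by decide)).symm.trans hs'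
        exact nomatch hq
      · have hq : (none : Option Tile) = some s' :=
          (mkSol_none a b e c d _ (by decide) (by decide)
            (by decide) (by decide) (by decide)).symm.trans hs'
        exact nomatch hq
    · subst h2
      injection hs with hs; subst hs
      fin_cases d'
      · have hq : some (rotTile c t0) = some s' :=
          (mkSol_p4 a b e c d).symm.trans hs'
        injection hq with hq
        rw [← hq]
        exact g4
      · have hq : some (rotTile d t0) = some s' :=
          (mkSol_p5 a b e c d).symm.trans hs'
        injection hq with hq
        rw [← hq]
        exact g5
      · have hq : some (rotTile e t0) = some s' :=
          (mkSol_p3 a b e c d).symm.trans hs'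
        injection hq with hq
        rw [← hq]
        exact g3
      · have hq : (none : Option Tile) = some s' :=
          (mkSol_none a b e c d _ (by decide) (by decide)
            (by decide) (by decide) (by decide)).symm.trans hs'
        exact nomatch hq
      · have hq : (none : Option Tile) = some s' :=
          (mkSol_none a b e c d _ (by decide) (by decide)
            (by decide) (by decide) (by decide)).symm.trans hs'
        exact nomatch hq
      · have hq : some (rotTile a t0) = some s' :=
          (mkSol_p1 a b e c d).symm.trans hs'
        injection hq with hq
        rw [← hq]
        exact g1.symm
    · subst h3
      injection hs with hs; subst hs
      fin_cases d'
      · have hq : some (rotTile d t0) = some s' :=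
          (mkSol_p5 a b e c d).symm.trans hs'
        injection hq with hq
        rw [← hq]
        exact g6
      · have hq : (none : Option Tile) = some s' :=
          (mkSol_none a b e c d _ (by decide) (by decide)
            (by decide) (by decide) (by decide)).symm.trans hs'
        exact nomatch hq
      · have hq : (none : Option Tile) = some s' :=
          (mkSol_none a b e c d _ (by decide) (by decide)
            (by decide) (by decide) (by decide)).symm.trans hs'
        exact nomatch hq
      · have hq : (none : Option Tile) = some s' :=
          (mkSol_none a b e c d _ (by decide) (by decide)
            (by decide) (by decide) (by decide)).symm.trans hs'
        exact nomatch hq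
      · have hq : (none : Option Tile) = some s' :=
          (mkSol_none a b e c d _ (by decide) (by decide)
            (by decide) (by decide) (by decide)).symm.trans hs'
        exact nomatch hq
      · have hq : some (rotTile b t0) = some s' :=
          (mkSol_p2 a b e c d).symm.trans hs'
        injection hq with hq
        rw [← hq]
        exact g3.symm
    · subst h4
      injection hs with hs; subst hs
      fin_cases d'
      · have hq : (none : Option Tile) = some s' :=
          (mkSol_none a b e c d _ (by decide) (by decide)
            (by decide) (by decide) (by decide)).symm.trans hs'
        exact nomatch hq
      · have hq : (none : Option Tile) = some s' :=
          (mkSol_none a b e c d _ (by decide) (by decide)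
            (by decide) (by decide) (by decide)).symm.trans hs'
        exact nomatch hq
      · have hq : some (rotTile d t0) = some s' :=
          (mkSol_p5 a b e c d).symm.trans hs'
        injection hq with hq
        rw [← hq]
        exact g7
      · have hq : some (rotTile b t0) = some s' :=
          (mkSol_p2 a b e c d).symm.trans hs'
        injection hq with hq
        rw [← hq]
        exact g4.symm
      · have hq : some (rotTile a t0) = some s' :=
          (mkSol_p1 a b e c d).symm.trans hs'
        injection hq with hq
        rw [← hq]
        exact g2.symm
      · have hq : (none : Option Tile) = some s' :=
          (mkSol_none a b e c d _ (by decide) (by decide)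
            (by decide) (by decide) (by decide)).symm.trans hs'
        exact nomatch hq
    · subst h5
      injection hs with hs; subst hs
      fin_cases d'
      · have hq : (none : Option Tile) = some s' :=
          (mkSol_none a b e c d _ (by decide) (by decide)
            (by decide) (by decide) (by decide)).symm.trans hs'
        exact nomatch hq
      · have hq : (none : Option Tile) = some s' :=
          (mkSol_none a b e c d _ (by decide) (by decide)
            (by decide) (by decide) (by decide)).symm.trans hs'
        exact nomatch hq
      · have hq : (none : Option Tile) = some s' :=
          (mkSol_none a b e c d _ (by decide) (by decide)
            (by decide) (by decide) (by decide)).symm.trans hs'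
        exact nomatch hq
      · have hq : some (rotTile e t0) = some s' :=
          (mkSol_p3 a b e c d).symm.trans hs'
        injection hq with hq
        rw [← hq]
        exact g6.symm
      · have hq : some (rotTile b t0) = some s' :=
          (mkSol_p2 a b e c d).symm.trans hs'
        injection hq with hq
        rw [← hq]
        exact g5.symm
      · have hq : some (rotTile c t0) = some s' :=
          (mkSol_p4 a b e c d).symm.trans hs'
        injection hq with hq
        rw [← hq]
        exact g7.symm

lemma master (c₁ c₂ : Color) (a b e c d : Fin 6)
    (hG : G a b e c d)
    (h1 : rotTile a t0 3 = c₁) (h2 : rotTile b t0 3 = c₂)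
    (h3 : rotTile c t0 0 = c₂) (h4 : rotTile d t0 0 = c₁)
    (hU : ∀ a' b' e' c' d' : Fin 6, G a' b' e' c' d' →
      rotTile a' t0 3 = c₁ → rotTile b' t0 3 = c₂ →
      a' = a ∧ b' = b ∧ e' = e ∧ c' = c ∧ d' = d) :
    ∃ sol : ℤ × ℤ → Option Tile,
      (IsSolution P sol ∧ SolColor sol p1 3 c₁ ∧ SolColor sol p2 3 c₂ ∧
        SolColor sol p4 0 c₂ ∧ SolColor sol p5 0 c₁) ∧
      (∀ sol' : ℤ × ℤ → Option Tile,
        IsSolution P sol' → SolColor sol' p1 3 c₁ → SolColor sol' p2 3 c₂ →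
          sol' = sol) := by
  refine ⟨mkSol a b e c d, ⟨isSolution_mkSol a b e c d hG,
    ⟨_, mkSol_p1 a b e c d, h1⟩, ⟨_, mkSol_p2 a b e c d, h2⟩,
    ⟨_, mkSol_p4 a b e c d, h3⟩, ⟨_, mkSol_p5 a b e c d, h4⟩⟩, ?_⟩
  intro sol' hsol' hA hB
  obtain ⟨ka, hka⟩ := (hsol'.1 p1).2 t0 Ptiles_p1
  obtain ⟨kb, hkb⟩ := (hsol'.1 p2).2 t0 Ptiles_p2
  obtain ⟨ke, hke⟩ := (hsol'.1 p3).2 t0 Ptiles_p3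
  obtain ⟨kc, hkc⟩ := (hsol'.1 p4).2 t0 Ptiles_p4
  obtain ⟨kd, hkd⟩ := (hsol'.1 p5).2 t0 Ptiles_p5
  have g1 : rotTile ka t0 2 = rotTile kb t0 5 :=
    hsol'.2 p1 2 _ _ hka hkb
  have g2 : rotTile ka t0 1 = rotTile kc t0 4 :=
    hsol'.2 p1 1 _ _ hka hkc
  have g3 : rotTile kb t0 2 = rotTile ke t0 5 :=
    hsol'.2 p2 2 _ _ hkb hke
  have g4 : rotTile kb t0 0 = rotTile kc t0 3 :=
    hsol'.2 p2 0 _ _ hkb hkc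
  have g5 : rotTile kb t0 1 = rotTile kd t0 4 :=
    hsol'.2 p2 1 _ _ hkb hkd
  have g6 : rotTile ke t0 0 = rotTile kd t0 3 :=
    hsol'.2 p3 0 _ _ hke hkd
  have g7 : rotTile kc t0 2 = rotTile kd t0 5 :=
    hsol'.2 p4 2 _ _ hkc hkd
  obtain ⟨sA, hsA, hcA⟩ := hA
  obtain ⟨sB, hsB, hcB⟩ := hB
  rw [hka] at hsA
  rw [hkb] at hsB
  injection hsA with hsA
  injection hsB with hsB
  subst hsA; subst hsB
  obtain ⟨ra, rb, re, rc, rd⟩ :=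
    hU ka kb ke kc kd ⟨g1, g2, g3, g4, g5, g6, g7⟩ hcA hcB
  rw [ra] at hka; rw [rb] at hkb; rw [re] at hke; rw [rc] at hkc; rw [rd] at hkd
  funext x
  by_cases h1 : x = p1
  · subst h1; rw [hka, mkSol_p1]
  by_cases h2 : x = p2
  · subst h2; rw [hkb, mkSol_p2]
  by_cases h3 : x = p3
  · subst h3; rw [hke, mkSol_p3]
  by_cases h4 : x = p4
  · subst h4; rw [hkc, mkSol_p4]
  by_cases h5 : x = p5
  · subst h5; rw [hkd, mkSol_p5]
  rw [(hsol'.1 x).1 (Ptiles_none x h1 h2 h3 h4 h5),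
    mkSol_none a b e c d x h1 h2 h3 h4 h5]

end CrossAux

set_option maxHeartbeats 1000000
set_option synthInstance.maxHeartbeats 1000000
set_option synthInstance.maxSize 2000

/-- the three-color CROSS subpuzzle: a left and a right input boundary edge at the bottom, a left and a right output boundary edge at the top; for each pair `(c₁, c₂) ∈ {blue, red}²` there is exactly one solution with colors `c₁`, `c₂` at the left and right input edges, and it has the swapped colors `c₂`, `c₁` at the left and right output edges. -/
theorem three_color_CROSS_subpuzzle :
    ∃ (P : Puzzle) (iL iR oL oR : ℤ × ℤ),
      IsBoundary P iL 3 ∧ IsBoundary P iR 3 ∧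
      IsBoundary P oL 0 ∧ IsBoundary P oR 0 ∧
      iL.1 < iR.1 ∧ oL.1 < oR.1 ∧ iL.2 < oL.2 ∧ iR.2 < oR.2 ∧
      ∀ c₁ ∈ ({Color.blue, Color.red} : Set Color),
        ∀ c₂ ∈ ({Color.blue, Color.red} : Set Color),
          ∃ sol : ℤ × ℤ → Option Tile,
            (IsSolution P sol ∧ SolColor sol iL 3 c₁ ∧ SolColor sol iR 3 c₂ ∧
              SolColor sol oL 0 c₂ ∧ SolColor sol oR 0 c₁) ∧
            (∀ sol' : ℤ × ℤ → Option Tile,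
              IsSolution P sol' → SolColor sol' iL 3 c₁ → SolColor sol' iR 3 c₂ →
                sol' = sol) := by
  classical
  open CrossAux in
  refine ⟨CrossAux.P, CrossAux.p1, CrossAux.p2, CrossAux.p4, CrossAux.p5,
    ?_, ?_, ?_, ?_, ?_, ?_, ?_, ?_, ?_⟩
  · constructor
    · simp [CrossAux.P, CrossAux.Ptiles, CrossAux.p1]
    · rw [show CrossAux.p1 + dirs 3 = ((0 : ℤ), (-1 : ℤ)) from by decide]
      simp [CrossAux.P, CrossAux.Ptiles, CrossAux.p1, CrossAux.p2,
        CrossAux.p3, CrossAux.p4, CrossAux.p5]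
  · constructor
    · simp [CrossAux.P, CrossAux.Ptiles, CrossAux.p1, CrossAux.p2]
    · rw [show CrossAux.p2 + dirs 3 = ((1 : ℤ), (-1 : ℤ)) from by decide]
      simp [CrossAux.P, CrossAux.Ptiles, CrossAux.p1, CrossAux.p2,
        CrossAux.p3, CrossAux.p4, CrossAux.p5]
  · constructor
    · simp [CrossAux.P, CrossAux.Ptiles, CrossAux.p1, CrossAux.p2,
        CrossAux.p3, CrossAux.p4]
    · rw [show CrossAux.p4 + dirs 0 = ((1 : ℤ), (2 : ℤ)) from by decide]
      simp [CrossAux.P, CrossAux.Ptiles, CrossAux.p1, CrossAux.p2,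
        CrossAux.p3, CrossAux.p4, CrossAux.p5]
  · constructor
    · simp [CrossAux.P, CrossAux.Ptiles, CrossAux.p1, CrossAux.p2,
        CrossAux.p3, CrossAux.p4, CrossAux.p5]
    · rw [show CrossAux.p5 + dirs 0 = ((2 : ℤ), (2 : ℤ)) from by decide]
      simp [CrossAux.P, CrossAux.Ptiles, CrossAux.p1, CrossAux.p2,
        CrossAux.p3, CrossAux.p4, CrossAux.p5]
  · norm_num [CrossAux.p1, CrossAux.p2]
  · norm_num [CrossAux.p4, CrossAux.p5]
  · norm_num [CrossAux.p1, CrossAux.p4]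
  · norm_num [CrossAux.p2, CrossAux.p5]
  · intro c₁ hc₁ c₂ hc₂
    simp only [Set.mem_insert_iff, Set.mem_singleton_iff] at hc₁ hc₂
    rcases hc₁ with rfl | rfl <;> rcases hc₂ with rfl | rfl
    · exact CrossAux.master Color.blue Color.blue 1 1 1 4 4 (by unfold CrossAux.G; decide)
        (by decide) (by decide) (by decide) (by decide)
        (by unfold CrossAux.G; decide)
    · exact CrossAux.master Color.blue Color.red 2 5 2 2 5 (by unfold CrossAux.G; decide)
        (by decide) (by decide) (by decide) (by decide)
        (by unfold CrossAux.G; decide)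
    · exact CrossAux.master Color.red Color.blue 5 2 5 5 2 (by unfold CrossAux.G; decide)
        (by decide) (by decide) (by decide) (by decide)
        (by unfold CrossAux.G; decide)
    · exact CrossAux.master Color.red Color.red 4 4 4 1 1 (by unfold CrossAux.G; decide)
        (by decide) (by decide) (by decide) (by decide)
        (by unfold CrossAux.G; decide)
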